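/- For integers n ≥ m ≥ 1 and k ≥ 2, the complete bipartite graph K_{m,n} is a TS_k-reconfiguration graph if and only if (m = 1 and n ≤ k) or (m = n = 2). -/

import Mathlib

open SimpleGraph

/-- `I` is an independent (stable) set of `G`. -/
def IsIndep {V : Type*} (G : SimpleGraph V) (I : Finset V) : Prop :=
  ∀ u ∈ I, ∀ v ∈ I, ¬ G.Adj u v

/-- Vertices of the `TS_k`-reconfiguration graph: size-`k` independent sets of `G`. -/
abbrev TSVert {V : Type*} (G : SimpleGraph V) (k : ℕ) := {I : Finset V // I.card = k ∧ IsIndep G I}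

/-- The `TS_k`-reconfiguration graph of `G`: size-`k` independent sets, adjacent iff
`I \ J = {u}`, `J \ I = {v}` and `uv ∈ E(G)`. -/
def TSk {V : Type*} [DecidableEq V] (G : SimpleGraph V) (k : ℕ) : SimpleGraph (TSVert G k) :=
  SimpleGraph.fromRel (fun I J =>
    ∃ u v, (I : Finset V) \ (J : Finset V) = {u} ∧
      (J : Finset V) \ (I : Finset V) = {v} ∧ G.Adj u v)

open Finset

section Helpers
variable {V : Type*} [DecidableEq V] {G : SimpleGraph V} {k : ℕ}
lemma TSk_adj (I J : TSVert G k) :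
    (TSk G k).Adj I J ↔ I ≠ J ∧ ∃ u v, (I : Finset V) \ (J : Finset V) = {u} ∧
      (J : Finset V) \ (I : Finset V) = {v} ∧ G.Adj u v := by
  rw [TSk, fromRel_adj]
  constructor
  · rintro ⟨hne, h | ⟨u, v, h1, h2, h3⟩⟩
    · exact ⟨hne, h⟩
    · exact ⟨hne, v, u, h2, h1, h3.symm⟩
  · rintro ⟨hne, h⟩
    exact ⟨hne, Or.inl h⟩
lemma TSk_adj_of (I J : TSVert G k) (u v : V) (hne : I ≠ J)
    (h1 : (I : Finset V) \ J = {u}) (h2 : (J : Finset V) \ I = {v}) (h3 : G.Adj u v) :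
    (TSk G k).Adj I J :=
  (TSk_adj I J).2 ⟨hne, u, v, h1, h2, h3⟩
lemma sdiff_mem_left {X Y : Finset V} {u : V} (h : X \ Y = {u}) : u ∈ X :=
  (Finset.mem_sdiff.1 (h ▸ Finset.mem_singleton_self u)).1
lemma sdiff_not_mem {X Y : Finset V} {u : V} (h : X \ Y = {u}) : u ∉ Y :=
  (Finset.mem_sdiff.1 (h ▸ Finset.mem_singleton_self u)).2
lemma sdiff_eq_of_mem {X Y : Finset V} {u : V} (h : X \ Y = {u}) {x : V}
    (hx : x ∈ X) (hy : x ∉ Y) : x = u :=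
  Finset.mem_singleton.1 (h ▸ Finset.mem_sdiff.2 ⟨hx, hy⟩)
lemma sdiff_transfer {X Y : Finset V} {u : V} (h : X \ Y = {u}) {x : V}
    (hx : x ∈ X) (hxu : x ≠ u) : x ∈ Y := by
  by_contra hxy
  exact hxu (sdiff_eq_of_mem h hx hxy)
lemma eq_insert_erase {X Y : Finset V} {u v : V} (h1 : X \ Y = {u}) (h2 : Y \ X = {v}) :
    Y = insert v (X.erase u) := by
  ext x
  simp only [Finset.mem_insert, Finset.mem_erase]
  constructor
  · intro hx
    by_cases hxX : x ∈ X
    · exact Or.inr ⟨fun he => sdiff_not_mem h1 (he ▸ hx), hxX⟩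
    · exact Or.inl (Finset.mem_singleton.1 (h2 ▸ Finset.mem_sdiff.2 ⟨hx, hxX⟩))
  · rintro (rfl | ⟨hxu, hxX⟩)
    · exact sdiff_mem_left h2
    · exact sdiff_transfer h1 hxX hxu
lemma not_TSk_adj_of_two {X Y : TSVert G k} {a b : V} (ha : a ∈ (X : Finset V))
    (ha' : a ∉ (Y : Finset V)) (hb : b ∈ (X : Finset V)) (hb' : b ∉ (Y : Finset V))
    (hab : a ≠ b) : ¬ (TSk G k).Adj X Y := by
  intro h
  obtain ⟨-, u, v, h1, -, -⟩ := (TSk_adj X Y).1 h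
  exact hab ((sdiff_eq_of_mem h1 ha ha').trans (sdiff_eq_of_mem h1 hb hb').symm)

/-- Two distinct non-adjacent neighbours of `I` moving the same token `u` produce a new
independent set `S` with two tokens outside `I`, non-adjacent to `B1`. -/
lemma twoSameToken (hk : 2 ≤ k) (I B1 B2 : TSVert G k) (u v1 v2 : V)
    (h1 : (I : Finset V) \ B1 = {u}) (h1' : (B1 : Finset V) \ I = {v1})
    (h2 : (I : Finset V) \ B2 = {u}) (h2' : (B2 : Finset V) \ I = {v2})
    (hne : B1 ≠ B2) (hnadj : ¬ (TSk G k).Adj B1 B2) :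
    ∃ S : TSVert G k, ((S : Finset V) \ I).card = 2 ∧ ¬ (TSk G k).Adj S B1 := by
  have huI : u ∈ (I : Finset V) := sdiff_mem_left h1
  have huB1 : u ∉ (B1 : Finset V) := sdiff_not_mem h1
  have hv1B1 : v1 ∈ (B1 : Finset V) := sdiff_mem_left h1'
  have hv1I : v1 ∉ (I : Finset V) := sdiff_not_mem h1'
  have hv2B2 : v2 ∈ (B2 : Finset V) := sdiff_mem_left h2'
  have hv2I : v2 ∉ (I : Finset V) := sdiff_not_mem h2'
  have hv12 : v1 ≠ v2 := by
    rintro rfl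
    exact hne (Subtype.ext ((eq_insert_erase h1 h1').trans (eq_insert_erase h2 h2').symm))
  have hv1B2 : v1 ∉ (B2 : Finset V) := fun h => hv12 (sdiff_eq_of_mem h2' h hv1I)
  have hv2B1 : v2 ∉ (B1 : Finset V) := fun h => hv12.symm (sdiff_eq_of_mem h1' h hv2I)
  -- v1 and v2 are non-adjacent in G
  have hnadj12 : ¬ G.Adj v1 v2 := by
    intro hA
    refine hnadj (TSk_adj_of B1 B2 v1 v2 hne ?_ ?_ hA)
    · ext x
      simp only [Finset.mem_sdiff, Finset.mem_singleton]
      constructor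
      · rintro ⟨hx1, hx2⟩
        by_cases hxI : x ∈ (I : Finset V)
        · exact absurd ((sdiff_eq_of_mem h2 hxI hx2) ▸ hx1) huB1
        · exact sdiff_eq_of_mem h1' hx1 hxI
      · rintro rfl; exact ⟨hv1B1, hv1B2⟩
    · ext x
      simp only [Finset.mem_sdiff, Finset.mem_singleton]
      constructor
      · rintro ⟨hx1, hx2⟩
        by_cases hxI : x ∈ (I : Finset V)
        · exact absurd ((sdiff_eq_of_mem h1 hxI hx2) ▸ hx1) (sdiff_not_mem h2)
        · exact sdiff_eq_of_mem h2' hx1 hxI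
      · rintro rfl; exact ⟨hv2B2, hv2B1⟩
  -- pick a token w in I other than u
  have hcard : (I : Finset V).card = k := I.2.1
  have hwex : ((I : Finset V).erase u).Nonempty := by
    rw [← Finset.card_pos, Finset.card_erase_of_mem huI, hcard]
    omega
  obtain ⟨w, hw⟩ := hwex
  have hwI : w ∈ (I : Finset V) := Finset.mem_of_mem_erase hw
  have hwu : w ≠ u := Finset.ne_of_mem_erase hw
  have hwB1 : w ∈ (B1 : Finset V) := sdiff_transfer h1 hwI hwu
  have hwB2 : w ∈ (B2 : Finset V) := sdiff_transfer h2 hwI hwu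
  have hwv1 : w ≠ v1 := fun h => hv1I (h ▸ hwI)
  have hwv2 : w ≠ v2 := fun h => hv2I (h ▸ hwI)
  -- the new set S
  set S0 : Finset V := insert v2 ((B1 : Finset V).erase w) with hS0
  have hv2mem : v2 ∉ (B1 : Finset V).erase w := fun h => hv2B1 (Finset.mem_of_mem_erase h)
  have hScard : S0.card = k := by
    rw [hS0, Finset.card_insert_of_notMem hv2mem, Finset.card_erase_of_mem hwB1, B1.2.1]
    omega
  have memS0 : ∀ x, x ∈ S0 ↔ x = v2 ∨ (x ∈ (B1 : Finset V) ∧ x ≠ w) := by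
    intro x
    simp only [hS0, Finset.mem_insert, Finset.mem_erase]
    tauto
  -- membership in I for elements of B1 other than v1
  have hB1I : ∀ x ∈ (B1 : Finset V), x ≠ v1 → x ∈ (I : Finset V) := by
    intro x hx hxv
    by_contra hxI
    exact hxv (sdiff_eq_of_mem h1' hx hxI)
  have hSindep : IsIndep G S0 := by
    intro a ha b hb hA
    rw [memS0] at ha hb
    rcases ha with rfl | ⟨haB, haw⟩
    · rcases hb with rfl | ⟨hbB, hbw⟩
      · exact G.irrefl hA
      · by_cases hbv : b = v1
        · exact hnadj12 (hbv ▸ hA.symm)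
        · have hbI := hB1I b hbB hbv
          have hbB2 : b ∈ (B2 : Finset V) := sdiff_transfer h2 hbI (fun h => huB1 (h ▸ hbB))
          exact B2.2.2 a hv2B2 b hbB2 hA
    · rcases hb with rfl | ⟨hbB, hbw⟩
      · by_cases hav : a = v1
        · exact hnadj12 (hav ▸ hA)
        · have haI := hB1I a haB hav
          have haB2 : a ∈ (B2 : Finset V) := sdiff_transfer h2 haI (fun h => huB1 (h ▸ haB))
          exact B2.2.2 a haB2 b hv2B2 hA
      · exact B1.2.2 a haB b hbB hA
  refine ⟨⟨S0, hScard, hSindep⟩, ?_, ?_⟩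
  · have : S0 \ (I : Finset V) = {v2, v1} := by
      ext x
      simp only [Finset.mem_sdiff, Finset.mem_insert, Finset.mem_singleton, memS0]
      constructor
      · rintro ⟨rfl | ⟨hxB, hxw⟩, hxI⟩
        · exact Or.inl rfl
        · exact Or.inr (sdiff_eq_of_mem h1' hxB hxI)
      · rintro (rfl | rfl)
        · exact ⟨Or.inl rfl, hv2I⟩
        · exact ⟨Or.inr ⟨hv1B1, fun h => hwv1 h.symm⟩, hv1I⟩
    rw [this]
    rw [Finset.card_insert_of_notMem (by simp [hv12.symm]), Finset.card_singleton]
  · intro hA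
    obtain ⟨-, a, b, hd1, hd2, hab⟩ := (TSk_adj _ _).1 hA
    have hv2S : v2 ∈ S0 := (memS0 v2).2 (Or.inl rfl)
    have hav2 : v2 = a := sdiff_eq_of_mem hd1 hv2S hv2B1
    have hwS : w ∉ S0 := by
      rw [memS0]
      push_neg
      exact ⟨hwv2, fun _ => rfl⟩
    have hbw : w = b := sdiff_eq_of_mem hd2 hwB1 hwS
    exact B2.2.2 v2 hv2B2 w hwB2 (hav2 ▸ hbw ▸ hab)
end Helpers

section K
variable {α β : Type*}
lemma K_adj_lr (a : α) (b : β) : (completeBipartiteGraph α β).Adj (.inl a) (.inr b) := by simp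
lemma K_not_adj_rr (a b : β) : ¬ (completeBipartiteGraph α β).Adj (.inr a) (.inr b) := by simp
lemma K_not_adj_ll (a b : α) : ¬ (completeBipartiteGraph α β).Adj (.inl a) (.inl b) := by simp
end K

section Forward
variable {V : Type*} [DecidableEq V] {G : SimpleGraph V} {k : ℕ}

/-- `K_{1,n}` with `n > k` is not a `TS_k` graph. -/
lemma starCase {n : ℕ} (hk : 2 ≤ k) (hkn : k < n)
    (e : TSk G k ≃g completeBipartiteGraph (Fin 1) (Fin n)) : False := by
  have hn0 : 0 < n := by omega
  set I : TSVert G k := e.symm (Sum.inl 0) with hI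
  set b : Fin n → TSVert G k := fun j => e.symm (Sum.inr j) with hb
  have hadj : ∀ j, (TSk G k).Adj I (b j) := fun j => e.symm.map_rel_iff.2 (K_adj_lr 0 j)
  choose u v hu hv hG using fun j => ((TSk_adj I (b j)).1 (hadj j)).2
  have hmaps : ∀ j ∈ (Finset.univ : Finset (Fin n)), u j ∈ (I : Finset V) :=
    fun j _ => sdiff_mem_left (hu j)
  have hlt : (I : Finset V).card < (Finset.univ : Finset (Fin n)).card := by
    rw [I.2.1, Finset.card_univ, Fintype.card_fin]; exact hkn
  obtain ⟨i, -, j, -, hij, huij⟩ := Finset.exists_ne_map_eq_of_card_lt_of_maps_to hlt hmaps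
  have hbne : b i ≠ b j := fun h => hij (Sum.inr.inj (e.symm.toEquiv.injective h))
  have hbnadj : ¬ (TSk G k).Adj (b i) (b j) :=
    fun h => K_not_adj_rr i j (e.symm.map_rel_iff.1 h)
  obtain ⟨S, hScard, -⟩ :=
    twoSameToken hk I (b i) (b j) (u i) (v i) (v j) (hu i) (hv i) (huij ▸ hu j) (hv j)
      hbne hbnadj
  rcases hES : e S with a | a
  · have hSI : S = I := by
      have h1 : e.symm (e S) = S := e.symm_apply_apply S
      rw [hES] at h1
      rw [← h1, hI]
      congr 1
      congr 1
      exact Subsingleton.elim a 0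
    rw [hSI] at hScard
    simp at hScard
  · have hSb : S = b a := by
      have h1 : e.symm (e S) = S := e.symm_apply_apply S
      rw [hES] at h1
      rw [← h1, hb]
    have hadj2 : (TSk G k).Adj I S := hSb ▸ hadj a
    obtain ⟨-, x, y, -, h2, -⟩ := (TSk_adj I S).1 hadj2
    rw [h2] at hScard
    simp at hScard

/-- `K_{m,n}` with `m ≥ 2`, `n ≥ 3` is not a `TS_k` graph. -/
lemma bigCase {m n : ℕ} (hk : 2 ≤ k) (hm : 2 ≤ m) (hn : 3 ≤ n)
    (e : TSk G k ≃g completeBipartiteGraph (Fin m) (Fin n)) : False := by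
  set I : TSVert G k := e.symm (Sum.inl ⟨0, by omega⟩) with hIdef
  set I' : TSVert G k := e.symm (Sum.inl ⟨1, by omega⟩) with hI'def
  set b : Fin n → TSVert G k := fun j => e.symm (Sum.inr j) with hbdef
  have hII' : I ≠ I' := by
    intro h
    have := e.symm.toEquiv.injective h
    simp [Fin.ext_iff] at this
  have hbinj : ∀ {i j : Fin n}, b i = b j → i = j :=
    fun h => Sum.inr.inj (e.symm.toEquiv.injective h)
  have hbnadj : ∀ i j, ¬ (TSk G k).Adj (b i) (b j) :=
    fun i j h => K_not_adj_rr i j (e.symm.map_rel_iff.1 h)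
  have hadj : ∀ j, (TSk G k).Adj I (b j) := fun j => e.symm.map_rel_iff.2 (K_adj_lr _ j)
  have hadj' : ∀ j, (TSk G k).Adj I' (b j) := fun j => e.symm.map_rel_iff.2 (K_adj_lr _ j)
  choose u v hu hv hG using fun j => ((TSk_adj I (b j)).1 (hadj j)).2
  choose u' v' hu' hv' hG' using fun j => ((TSk_adj I' (b j)).1 (hadj' j)).2
  -- the difference of I and I'
  have hDne : ((I : Finset V) \ (I' : Finset V)).Nonempty := by
    rw [Finset.sdiff_nonempty]
    intro hsub
    exact hII' (Subtype.ext (Finset.eq_of_subset_of_card_le hsub (by rw [I.2.1, I'.2.1])))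
  have hD2 : ((I : Finset V) \ (I' : Finset V)).card ≤ 2 := by
    have hsub : (I : Finset V) \ (I' : Finset V) ⊆ {u ⟨0, by omega⟩, v' ⟨0, by omega⟩} := by
      intro x hx
      obtain ⟨hx1, hx2⟩ := Finset.mem_sdiff.1 hx
      by_cases hxb : x ∈ (b ⟨0, by omega⟩ : Finset V)
      · exact Finset.mem_insert.2 (Or.inr (Finset.mem_singleton.2
          (sdiff_eq_of_mem (hv' ⟨0, by omega⟩) hxb hx2)))
      · exact Finset.mem_insert.2 (Or.inl (sdiff_eq_of_mem (hu ⟨0, by omega⟩) hx1 hxb))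
    calc ((I : Finset V) \ (I' : Finset V)).card ≤ _ := Finset.card_le_card hsub
      _ ≤ ({v' ⟨0, by omega⟩} : Finset V).card + 1 := Finset.card_insert_le _ _
      _ ≤ 2 := by simp
  have hcomm : ((I' : Finset V) \ (I : Finset V)).card
      = ((I : Finset V) \ (I' : Finset V)).card :=
    Finset.card_sdiff_comm (by rw [I.2.1, I'.2.1])
  -- three distinct indices in Fin n
  have hne01 : (⟨0, by omega⟩ : Fin n) ≠ ⟨1, by omega⟩ := by simp [Fin.ext_iff]
  have hne02 : (⟨0, by omega⟩ : Fin n) ≠ ⟨2, by omega⟩ := by simp [Fin.ext_iff]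
  have hne12 : (⟨1, by omega⟩ : Fin n) ≠ ⟨2, by omega⟩ := by simp [Fin.ext_iff]
  have hD12 : ((I : Finset V) \ (I' : Finset V)).card = 1
      ∨ ((I : Finset V) \ (I' : Finset V)).card = 2 := by
    have := Finset.card_pos.2 hDne
    omega
  rcases hD12 with hD1 | hDtwo
  · -- case |I \ I'| = 1
    obtain ⟨p, hp⟩ := Finset.card_eq_one.1 hD1
    obtain ⟨q, hq⟩ := Finset.card_eq_one.1 (hcomm.trans hD1)
    have hpI : p ∈ (I : Finset V) := sdiff_mem_left hp
    have hpI' : p ∉ (I' : Finset V) := sdiff_not_mem hp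
    have hqI' : q ∈ (I' : Finset V) := sdiff_mem_left hq
    have hqI : q ∉ (I : Finset V) := sdiff_not_mem hq
    have hcl : ∀ j, v j = q ∨ u j = p := by
      intro j
      by_cases hqb : q ∈ (b j : Finset V)
      · exact Or.inl (sdiff_eq_of_mem (hv j) hqb hqI).symm
      · right
        by_contra hup
        have h1 : u j ∈ (I' : Finset V) := sdiff_transfer hp (sdiff_mem_left (hu j)) hup
        have h2 : u j = u' j := sdiff_eq_of_mem (hu' j) h1 (sdiff_not_mem (hu j))
        have h3 : q = u' j := sdiff_eq_of_mem (hu' j) hqI' hqb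
        exact hqI ((h2.trans h3.symm) ▸ sdiff_mem_left (hu j))
    have T1 : ∀ i j : Fin n, i ≠ j → v i = q → v j = q → False := by
      intro i j hij hvi hvj
      have hbne : b i ≠ b j := fun h => hij (hbinj h)
      have huij : u i ≠ u j := by
        intro h
        refine hbne (Subtype.ext ?_)
        rw [eq_insert_erase (hu i) (hv i), eq_insert_erase (hu j) (hv j), h, hvi, hvj]
      have h1 : u i ∈ (b j : Finset V) := sdiff_transfer (hu j) (sdiff_mem_left (hu i)) huij
      have h2 : q ∈ (b j : Finset V) := hvj ▸ sdiff_mem_left (hv j)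
      exact (b j).2.2 (u i) h1 q h2 (hvi ▸ hG i)
    have T2 : ∀ i j : Fin n, i ≠ j → u i = p → u j = p → False := by
      intro i j hij hui huj
      have hbne : b i ≠ b j := fun h => hij (hbinj h)
      obtain ⟨S, hScard, hSnadj⟩ := twoSameToken hk I (b i) (b j) p (v i) (v j)
        (hui ▸ hu i) (hv i) (huj ▸ hu j) (hv j) hbne (hbnadj i j)
      rcases hES : e S with x | x
      · have hSx : S = e.symm (Sum.inl x) := by rw [← hES, e.symm_apply_apply]
        exact hSnadj (hSx ▸ e.symm.map_rel_iff.2 (K_adj_lr x i))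
      · have hSx : S = b x := by
          show S = e.symm (Sum.inr x)
          rw [← hES, e.symm_apply_apply]
        have hadj2 : (TSk G k).Adj I S := hSx ▸ hadj x
        obtain ⟨-, y, z, -, h2, -⟩ := (TSk_adj I S).1 hadj2
        rw [h2] at hScard
        simp at hScard
    rcases hcl ⟨0, by omega⟩ with h0 | h0 <;> rcases hcl ⟨1, by omega⟩ with h1 | h1 <;>
      rcases hcl ⟨2, by omega⟩ with h2 | h2
    · exact T1 _ _ hne01 h0 h1
    · exact T1 _ _ hne01 h0 h1
    · exact T1 _ _ hne02 h0 h2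
    · exact T2 _ _ hne12 h1 h2
    · exact T1 _ _ hne12 h1 h2
    · exact T2 _ _ hne02 h0 h2
    · exact T2 _ _ hne01 h0 h1
    · exact T2 _ _ hne01 h0 h1
  · -- case |I \ I'| = 2
    obtain ⟨p1, p2, hp12, hD⟩ := Finset.card_eq_two.1 hDtwo
    obtain ⟨q1, q2, hq12, hE⟩ := Finset.card_eq_two.1 (hcomm.trans hDtwo)
    have hmemD : ∀ x ∈ ({p1, p2} : Finset V), x ∈ (I : Finset V) ∧ x ∉ (I' : Finset V) := by
      intro x hx
      rw [← hD] at hx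
      exact Finset.mem_sdiff.1 hx
    have hmemE : ∀ x ∈ ({q1, q2} : Finset V), x ∈ (I' : Finset V) ∧ x ∉ (I : Finset V) := by
      intro x hx
      rw [← hE] at hx
      exact Finset.mem_sdiff.1 hx
    have hp1m := hmemD p1 (Finset.mem_insert_self p1 {p2})
    have hp2m := hmemD p2 (Finset.mem_insert_of_mem (Finset.mem_singleton_self p2))
    have hq1m := hmemE q1 (Finset.mem_insert_self q1 {q2})
    have hq2m := hmemE q2 (Finset.mem_insert_of_mem (Finset.mem_singleton_self q2))
    have A : ∀ j, u j = p1 ∨ u j = p2 := by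
      intro j
      by_cases h1 : p1 ∈ (b j : Finset V)
      · by_cases h2 : p2 ∈ (b j : Finset V)
        · exfalso
          have e1 : p1 = v' j := sdiff_eq_of_mem (hv' j) h1 hp1m.2
          have e2 : p2 = v' j := sdiff_eq_of_mem (hv' j) h2 hp2m.2
          exact hp12 (e1.trans e2.symm)
        · exact Or.inr (sdiff_eq_of_mem (hu j) hp2m.1 h2).symm
      · exact Or.inl (sdiff_eq_of_mem (hu j) hp1m.1 h1).symm
    have B : ∀ j, v j = q1 ∨ v j = q2 := by
      intro j
      by_cases h1 : q1 ∈ (b j : Finset V)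
      · exact Or.inl (sdiff_eq_of_mem (hv j) h1 hq1m.2).symm
      · by_cases h2 : q2 ∈ (b j : Finset V)
        · exact Or.inr (sdiff_eq_of_mem (hv j) h2 hq2m.2).symm
        · exfalso
          have e1 : q1 = u' j := sdiff_eq_of_mem (hu' j) hq1m.1 h1
          have e2 : q2 = u' j := sdiff_eq_of_mem (hu' j) hq2m.1 h2
          exact hq12 (e1.trans e2.symm)
    have key : ∀ i j : Fin n, i ≠ j → u i = u j → False := by
      intro i j hij huij
      have hbne : b i ≠ b j := fun h => hij (hbinj h)
      obtain ⟨p', hp'I, hp'I', hp'ne⟩ :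
          ∃ p', p' ∈ (I : Finset V) ∧ p' ∉ (I' : Finset V) ∧ p' ≠ u i := by
        rcases A i with h | h
        · exact ⟨p2, hp2m.1, hp2m.2, fun hh => hp12 (hh.trans h).symm⟩
        · exact ⟨p1, hp1m.1, hp1m.2, fun hh => hp12 (hh.trans h)⟩
      have hvij : v i ≠ v j := by
        intro h
        refine hbne (Subtype.ext ?_)
        rw [eq_insert_erase (hu i) (hv i), eq_insert_erase (hu j) (hv j), huij, h]
      have hviI' : v i ∈ (I' : Finset V) := by
        rcases B i with h | h
        · rw [h]; exact hq1m.1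
        · rw [h]; exact hq2m.1
      have hviI : v i ∉ (I : Finset V) := sdiff_not_mem (hv i)
      have hvibj : v i ∉ (b j : Finset V) :=
        fun hmem => hvij (sdiff_eq_of_mem (hv j) hmem hviI)
      have e1 : v i = u' j := sdiff_eq_of_mem (hu' j) hviI' hvibj
      have hp'bj : p' ∈ (b j : Finset V) := sdiff_transfer (hu j) hp'I (huij ▸ hp'ne)
      have e2 : p' = v' j := sdiff_eq_of_mem (hv' j) hp'bj hp'I'
      have hG2 : G.Adj (v i) p' := by
        rw [e1, e2]
        exact hG' j
      exact (b i).2.2 (v i) (sdiff_mem_left (hv i)) p' (sdiff_transfer (hu i) hp'I hp'ne) hG2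
    rcases A ⟨0, by omega⟩ with h0 | h0 <;> rcases A ⟨1, by omega⟩ with h1 | h1 <;>
      rcases A ⟨2, by omega⟩ with h2 | h2
    · exact key _ _ hne01 (h0.trans h1.symm)
    · exact key _ _ hne01 (h0.trans h1.symm)
    · exact key _ _ hne02 (h0.trans h2.symm)
    · exact key _ _ hne12 (h1.trans h2.symm)
    · exact key _ _ hne12 (h1.trans h2.symm)
    · exact key _ _ hne02 (h0.trans h2.symm)
    · exact key _ _ hne01 (h0.trans h1.symm)
    · exact key _ _ hne01 (h0.trans h1.symm)
end Forward

section StarConstr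
open Finset

/-- witness graph for `K_{1,n}`, `n ≤ k`. -/
def G1 (k n : ℕ) : SimpleGraph (Fin k ⊕ Fin n) where
  Adj a b := (∃ i j, a = .inl i ∧ b = .inr j ∧ (i : ℕ) = (j : ℕ)) ∨
             (∃ i j, a = .inr j ∧ b = .inl i ∧ (i : ℕ) = (j : ℕ)) ∨
             (∃ i j, a = .inr i ∧ b = .inr j ∧ i ≠ j)
  symm := by
    constructor
    rintro a b (⟨i, j, rfl, rfl, h⟩ | ⟨i, j, rfl, rfl, h⟩ | ⟨i, j, rfl, rfl, h⟩)
    · exact Or.inr (Or.inl ⟨i, j, rfl, rfl, h⟩)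
    · exact Or.inl ⟨i, j, rfl, rfl, h⟩
    · exact Or.inr (Or.inr ⟨j, i, rfl, rfl, h.symm⟩)
  loopless := by
    constructor
    rintro a (⟨i, j, rfl, heq, -⟩ | ⟨i, j, rfl, heq, -⟩ | ⟨i, j, rfl, heq, h⟩)
    · exact absurd heq (by simp)
    · exact absurd heq (by simp)
    · exact h (Sum.inr.inj heq)

variable {k n : ℕ}

lemma G1_adj_lr {i : Fin k} {j : Fin n} :
    (G1 k n).Adj (.inl i) (.inr j) ↔ (i : ℕ) = (j : ℕ) := by
  simp [G1]

lemma G1_adj_rl {i : Fin k} {j : Fin n} :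
    (G1 k n).Adj (.inr j) (.inl i) ↔ (i : ℕ) = (j : ℕ) := by
  simp [G1]

lemma G1_adj_rr {j j' : Fin n} : (G1 k n).Adj (.inr j) (.inr j') ↔ j ≠ j' := by
  simp [G1]

lemma G1_not_adj_ll {i i' : Fin k} : ¬ (G1 k n).Adj (.inl i) (.inl i') := by
  simp [G1]

def I0 (k n : ℕ) : Finset (Fin k ⊕ Fin n) := Finset.univ.map Function.Embedding.inl

def castkn (hnk : n ≤ k) (j : Fin n) : Fin k := ⟨(j : ℕ), lt_of_lt_of_le j.2 hnk⟩

def Ij (hnk : n ≤ k) (j : Fin n) : Finset (Fin k ⊕ Fin n) :=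
  insert (.inr j) ((Finset.univ.erase (castkn hnk j)).map Function.Embedding.inl)

lemma mem_I0 {x : Fin k ⊕ Fin n} : x ∈ I0 k n ↔ ∃ i, x = .inl i := by
  simp only [I0, Finset.mem_map, Finset.mem_univ, true_and, Function.Embedding.inl_apply]
  exact ⟨fun ⟨i, h⟩ => ⟨i, h.symm⟩, fun ⟨i, h⟩ => ⟨i, h.symm⟩⟩

lemma mem_Ij {hnk : n ≤ k} {j : Fin n} {x : Fin k ⊕ Fin n} :
    x ∈ Ij hnk j ↔ x = .inr j ∨ ∃ i, i ≠ castkn hnk j ∧ x = .inl i := by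
  simp only [Ij, Finset.mem_insert, Finset.mem_map, Finset.mem_erase, Finset.mem_univ,
    and_true, Function.Embedding.inl_apply]
  constructor
  · rintro (h | ⟨i, hi, rfl⟩)
    · exact Or.inl h
    · exact Or.inr ⟨i, hi, rfl⟩
  · rintro (h | ⟨i, hi, rfl⟩)
    · exact Or.inl h
    · exact Or.inr ⟨i, hi, rfl⟩

lemma I0_card : (I0 k n).card = k := by simp [I0]

lemma Ij_card (hk : 1 ≤ k) (hnk : n ≤ k) (j : Fin n) : (Ij hnk j).card = k := by
  rw [Ij, Finset.card_insert_of_notMem (by simp), Finset.card_map,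
    Finset.card_erase_of_mem (Finset.mem_univ _), Finset.card_univ, Fintype.card_fin]
  omega

lemma I0_indep : IsIndep (G1 k n) (I0 k n) := by
  intro a ha b hb hA
  obtain ⟨i, rfl⟩ := mem_I0.1 ha
  obtain ⟨i', rfl⟩ := mem_I0.1 hb
  exact G1_not_adj_ll hA

lemma Ij_indep (hnk : n ≤ k) (j : Fin n) : IsIndep (G1 k n) (Ij hnk j) := by
  intro a ha b hb hA
  rcases mem_Ij.1 ha with rfl | ⟨i, hi, rfl⟩
  · rcases mem_Ij.1 hb with rfl | ⟨i', hi', rfl⟩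
    · exact (G1_adj_rr.1 hA) rfl
    · exact hi' (Fin.ext (by simpa [castkn] using G1_adj_rl.1 hA))
  · rcases mem_Ij.1 hb with rfl | ⟨i', hi', rfl⟩
    · exact hi (Fin.ext (by simpa [castkn] using G1_adj_lr.1 hA))
    · exact G1_not_adj_ll hA

lemma star_classify (hk : 1 ≤ k) (hnk : n ≤ k) (S : Finset (Fin k ⊕ Fin n))
    (hcard : S.card = k) (hindep : IsIndep (G1 k n) S) :
    S = I0 k n ∨ ∃ j, S = Ij hnk j := by
  by_cases hinr : ∃ j, (.inr j : Fin k ⊕ Fin n) ∈ S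
  · obtain ⟨j, hj⟩ := hinr
    right
    refine ⟨j, Finset.eq_of_subset_of_card_le ?_ (by rw [hcard, Ij_card hk hnk])⟩
    intro x hx
    rcases x with i | j'
    · refine mem_Ij.2 (Or.inr ⟨i, fun hij => ?_, rfl⟩)
      exact hindep _ hx _ hj (G1_adj_lr.2 (by rw [hij]; rfl))
    · rcases eq_or_ne j' j with rfl | hne
      · exact mem_Ij.2 (Or.inl rfl)
      · exact absurd (G1_adj_rr.2 hne) (hindep _ hx _ hj)
  · left
    refine Finset.eq_of_subset_of_card_le ?_ (by rw [hcard, I0_card])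
    intro x hx
    rcases x with i | j
    · exact mem_I0.2 ⟨i, rfl⟩
    · exact absurd ⟨j, hx⟩ hinr

lemma not_inr_mem_I0 {j : Fin n} : (.inr j : Fin k ⊕ Fin n) ∉ I0 k n := by
  rw [mem_I0]
  rintro ⟨i, h⟩
  exact Sum.inr_ne_inl h

lemma inr_mem_Ij {hnk : n ≤ k} {j : Fin n} : (.inr j : Fin k ⊕ Fin n) ∈ Ij hnk j :=
  mem_Ij.2 (Or.inl rfl)

lemma inr_not_mem_Ij {hnk : n ≤ k} {j j' : Fin n} (h : j ≠ j') :
    (.inr j : Fin k ⊕ Fin n) ∉ Ij hnk j' := by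
  rw [mem_Ij]
  rintro (heq | ⟨i, -, heq⟩)
  · exact h (Sum.inr.inj heq)
  · exact Sum.inr_ne_inl heq

lemma inl_cast_not_mem_Ij {hnk : n ≤ k} {j : Fin n} :
    (.inl (castkn hnk j) : Fin k ⊕ Fin n) ∉ Ij hnk j := by
  rw [mem_Ij]
  rintro (heq | ⟨i, hi, heq⟩)
  · exact Sum.inl_ne_inr heq
  · exact hi (Sum.inl.inj heq).symm

lemma inl_mem_Ij {hnk : n ≤ k} {j : Fin n} {i : Fin k} (h : i ≠ castkn hnk j) :
    (.inl i : Fin k ⊕ Fin n) ∈ Ij hnk j :=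
  mem_Ij.2 (Or.inr ⟨i, h, rfl⟩)

lemma starConstr (hk : 2 ≤ k) (hn : 1 ≤ n) (hnk : n ≤ k) :
    Nonempty (TSk (G1 k n) k ≃g completeBipartiteGraph (Fin 1) (Fin n)) := by
  have hk1 : 1 ≤ k := by omega
  set v0 : TSVert (G1 k n) k := ⟨I0 k n, I0_card, I0_indep⟩ with hv0
  set vj : Fin n → TSVert (G1 k n) k :=
    fun j => ⟨Ij hnk j, Ij_card hk1 hnk j, Ij_indep hnk j⟩ with hvj
  set φ : Fin 1 ⊕ Fin n → TSVert (G1 k n) k := Sum.elim (fun _ => v0) vj with hφ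
  have hI0Ij : ∀ j, I0 k n ≠ Ij hnk j := by
    intro j h
    exact not_inr_mem_I0 (h ▸ inr_mem_Ij)
  have hinj : Function.Injective φ := by
    rintro (a | a) (b | b) h
    · exact congrArg Sum.inl (Subsingleton.elim a b)
    · exact absurd (congrArg Subtype.val h) (hI0Ij b)
    · exact absurd (congrArg Subtype.val h).symm (hI0Ij a)
    · have hval : Ij hnk a = Ij hnk b := congrArg Subtype.val h
      have h2 : (.inr a : Fin k ⊕ Fin n) ∈ Ij hnk b := hval ▸ inr_mem_Ij
      rcases mem_Ij.1 h2 with heq | ⟨i, -, heq⟩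
      · exact congrArg Sum.inr (Sum.inr.inj heq)
      · exact absurd heq Sum.inr_ne_inl
  have hsurj : Function.Surjective φ := by
    intro S
    rcases star_classify hk1 hnk S.1 S.2.1 S.2.2 with h | ⟨j, h⟩
    · exact ⟨.inl 0, Subtype.ext h.symm⟩
    · exact ⟨.inr j, Subtype.ext h.symm⟩
  have edge0j : ∀ j, (TSk (G1 k n) k).Adj v0 (vj j) := by
    intro j
    refine TSk_adj_of v0 (vj j) (.inl (castkn hnk j)) (.inr j)
      (fun h => hI0Ij j (congrArg Subtype.val h)) ?_ ?_ (G1_adj_lr.2 rfl)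
    · ext x
      simp only [Finset.mem_sdiff, Finset.mem_singleton]
      constructor
      · rintro ⟨hx1, hx2⟩
        obtain ⟨i, rfl⟩ := mem_I0.1 hx1
        rcases eq_or_ne i (castkn hnk j) with rfl | hne
        · rfl
        · exact absurd (inl_mem_Ij hne) hx2
      · rintro rfl
        exact ⟨mem_I0.2 ⟨_, rfl⟩, inl_cast_not_mem_Ij⟩
    · ext x
      simp only [Finset.mem_sdiff, Finset.mem_singleton]
      constructor
      · rintro ⟨hx1, hx2⟩
        rcases mem_Ij.1 hx1 with heq | ⟨i, -, rfl⟩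
        · exact heq
        · exact absurd (mem_I0.2 ⟨i, rfl⟩) hx2
      · rintro rfl
        exact ⟨inr_mem_Ij, not_inr_mem_I0⟩
  have nonadj : ∀ j j' : Fin n, j ≠ j' → ¬ (TSk (G1 k n) k).Adj (vj j) (vj j') := by
    intro j j' hne
    refine not_TSk_adj_of_two (a := .inr j) (b := .inl (castkn hnk j')) inr_mem_Ij
      (inr_not_mem_Ij hne) ?_ inl_cast_not_mem_Ij Sum.inr_ne_inl
    refine inl_mem_Ij (fun h => hne (Fin.ext ?_))
    have h2 : (castkn hnk j').val = (castkn hnk j).val := congrArg Fin.val h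
    simpa [castkn] using h2.symm
  refine ⟨(SimpleGraph.Iso.symm ⟨Equiv.ofBijective φ ⟨hinj, hsurj⟩, ?_⟩ :)⟩
  rintro (a | a) (b | b)
  · constructor
    · intro h
      exact ((TSk (G1 k n) k).loopless.irrefl v0 (by exact h)).elim
    · intro h
      exact (K_not_adj_ll a b h).elim
  · exact iff_of_true (by exact edge0j b) (K_adj_lr a b)
  · exact iff_of_true (by exact (edge0j a).symm) ((K_adj_lr b a).symm)
  · constructor
    · intro h
      rcases eq_or_ne a b with rfl | hne
      · exact ((TSk (G1 k n) k).loopless.irrefl _ h).elim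
      · exact (nonadj a b hne (by exact h)).elim
    · intro h
      exact (K_not_adj_rr a b h).elim
end StarConstr

section C4Constr
open Finset

def G2 (k : ℕ) : SimpleGraph (Fin (k+2)) :=
  SimpleGraph.fromRel (fun a b => ((a : ℕ) = 0 ∧ (b : ℕ) = 1) ∨ ((a : ℕ) = 2 ∧ (b : ℕ) = 3))

lemma G2_adj_iff {k : ℕ} {a b : Fin (k+2)} : (G2 k).Adj a b ↔ a ≠ b ∧
    (((a:ℕ)=0 ∧ (b:ℕ)=1) ∨ ((a:ℕ)=2 ∧ (b:ℕ)=3) ∨ ((b:ℕ)=0 ∧ (a:ℕ)=1) ∨ ((b:ℕ)=2 ∧ (a:ℕ)=3)) := by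
  rw [G2, fromRel_adj]
  tauto

lemma pair_sdiff {α : Type*} [DecidableEq α] [Fintype α] {a b c : α}
    (h1 : c ≠ a) (h2 : c ≠ b) :
    (univ \ ({a, b} : Finset α)) \ (univ \ ({a, c} : Finset α)) = {c} := by
  ext x
  simp only [Finset.mem_sdiff, Finset.mem_univ, true_and, Finset.mem_insert,
    Finset.mem_singleton, not_or]
  constructor
  · rintro ⟨⟨hxa, hxb⟩, hx2⟩
    by_contra hxc
    exact hx2 ⟨hxa, hxc⟩
  · rintro rfl
    exact ⟨⟨h1, h2⟩, fun h => h.2 rfl⟩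

set_option maxHeartbeats 2000000 in
lemma c4Constr (k : ℕ) (hk : 2 ≤ k) :
    Nonempty (TSk (G2 k) k ≃g completeBipartiteGraph (Fin 2) (Fin 2)) := by
  set z0 : Fin (k+2) := ⟨0, by omega⟩ with hz0def
  set z1 : Fin (k+2) := ⟨1, by omega⟩ with hz1def
  set z2 : Fin (k+2) := ⟨2, by omega⟩ with hz2def
  set z3 : Fin (k+2) := ⟨3, by omega⟩ with hz3def
  have hz01 : z0 ≠ z1 := Fin.ne_of_val_ne (show (0:ℕ) ≠ (1:ℕ) by omega)
  have hz02 : z0 ≠ z2 := Fin.ne_of_val_ne (show (0:ℕ) ≠ (2:ℕ) by omega)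
  have hz03 : z0 ≠ z3 := Fin.ne_of_val_ne (show (0:ℕ) ≠ (3:ℕ) by omega)
  have hz12 : z1 ≠ z2 := Fin.ne_of_val_ne (show (1:ℕ) ≠ (2:ℕ) by omega)
  have hz13 : z1 ≠ z3 := Fin.ne_of_val_ne (show (1:ℕ) ≠ (3:ℕ) by omega)
  have hz23 : z2 ≠ z3 := Fin.ne_of_val_ne (show (2:ℕ) ≠ (3:ℕ) by omega)
  set SS : Fin (k+2) → Fin (k+2) → Finset (Fin (k+2)) :=
    fun a b => univ \ ({a, b} : Finset (Fin (k+2))) with hSSdef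
  have mem_SS : ∀ {a b x : Fin (k+2)}, x ∈ SS a b ↔ x ≠ a ∧ x ≠ b := by
    intro a b x
    simp only [hSSdef, Finset.mem_sdiff, Finset.mem_univ, true_and, Finset.mem_insert,
      Finset.mem_singleton, not_or]
  have card_SS : ∀ {a b : Fin (k+2)}, a ≠ b → (SS a b).card = k := by
    intro a b hab
    rw [hSSdef]
    rw [Finset.card_sdiff_of_subset (Finset.subset_univ _), Finset.card_univ, Fintype.card_fin,
      Finset.card_pair hab]
    omega
  have indep_SS : ∀ {a b : Fin (k+2)}, ((a:ℕ) = 0 ∨ (a:ℕ) = 1) → ((b:ℕ) = 2 ∨ (b:ℕ) = 3) →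
      IsIndep (G2 k) (SS a b) := by
    intro a b ha hb x hx y hy hA
    have hxa := (mem_SS.1 hx).1
    have hxb := (mem_SS.1 hx).2
    have hya := (mem_SS.1 hy).1
    have hyb := (mem_SS.1 hy).2
    rcases (G2_adj_iff.1 hA).2 with ⟨e1, e2⟩ | ⟨e1, e2⟩ | ⟨e1, e2⟩ | ⟨e1, e2⟩ <;>
      rcases ha with ha | ha <;> rcases hb with hb | hb <;>
        first
          | exact hxa (Fin.ext (by omega))
          | exact hxb (Fin.ext (by omega))
          | exact hya (Fin.ext (by omega))
          | exact hyb (Fin.ext (by omega))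
  have hadj01 : (G2 k).Adj z0 z1 := G2_adj_iff.2 ⟨hz01, Or.inl ⟨rfl, rfl⟩⟩
  have hadj23 : (G2 k).Adj z2 z3 := G2_adj_iff.2 ⟨hz23, Or.inr (Or.inl ⟨rfl, rfl⟩)⟩
  have classify : ∀ S : TSVert (G2 k) k, ∃ a b : Fin (k+2),
      ((a = z0 ∨ a = z1) ∧ (b = z2 ∨ b = z3)) ∧ (S : Finset (Fin (k+2))) = SS a b := by
    intro S
    have h01 : z0 ∉ (S : Finset (Fin (k+2))) ∨ z1 ∉ (S : Finset (Fin (k+2))) := by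
      by_contra h
      push_neg at h
      exact S.2.2 z0 h.1 z1 h.2 hadj01
    have h23 : z2 ∉ (S : Finset (Fin (k+2))) ∨ z3 ∉ (S : Finset (Fin (k+2))) := by
      by_contra h
      push_neg at h
      exact S.2.2 z2 h.1 z3 h.2 hadj23
    obtain ⟨a, haz, haS⟩ : ∃ a, (a = z0 ∨ a = z1) ∧ a ∉ (S : Finset (Fin (k+2))) := by
      rcases h01 with h | h
      · exact ⟨z0, Or.inl rfl, h⟩
      · exact ⟨z1, Or.inr rfl, h⟩
    obtain ⟨b, hbz, hbS⟩ : ∃ b, (b = z2 ∨ b = z3) ∧ b ∉ (S : Finset (Fin (k+2))) := by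
      rcases h23 with h | h
      · exact ⟨z2, Or.inl rfl, h⟩
      · exact ⟨z3, Or.inr rfl, h⟩
    have hab : a ≠ b := by
      rcases haz with rfl | rfl <;> rcases hbz with rfl | rfl <;> assumption
    refine ⟨a, b, ⟨haz, hbz⟩, ?_⟩
    refine Finset.eq_of_subset_of_card_le ?_ (by rw [card_SS hab, S.2.1])
    intro x hx
    refine mem_SS.2 ⟨fun h => haS (h ▸ hx), fun h => hbS (h ▸ hx)⟩
  -- the four vertices
  let vP0 : TSVert (G2 k) k := ⟨SS z0 z2, card_SS hz02, indep_SS (a:=z0) (b:=z2) (Or.inl rfl) (Or.inl rfl)⟩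
  let vP1 : TSVert (G2 k) k := ⟨SS z1 z3, card_SS hz13, indep_SS (a:=z1) (b:=z3) (Or.inr rfl) (Or.inr rfl)⟩
  let vQ0 : TSVert (G2 k) k := ⟨SS z0 z3, card_SS hz03, indep_SS (a:=z0) (b:=z3) (Or.inl rfl) (Or.inr rfl)⟩
  let vQ1 : TSVert (G2 k) k := ⟨SS z1 z2, card_SS hz12, indep_SS (a:=z1) (b:=z2) (Or.inr rfl) (Or.inl rfl)⟩
  have SS_ne : ∀ {a b a' b' : Fin (k+2)} (x : Fin (k+2)),
      x ≠ a → x ≠ b → (x = a' ∨ x = b') → SS a b ≠ SS a' b' := by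
    intro a b a' b' x h1 h2 h3 heq
    have hx : x ∈ SS a' b' := heq ▸ mem_SS.2 ⟨h1, h2⟩
    rcases h3 with rfl | rfl
    · exact (mem_SS.1 hx).1 rfl
    · exact (mem_SS.1 hx).2 rfl
  have SS_comm : ∀ a b : Fin (k+2), SS a b = SS b a := by
    intro a b
    rw [hSSdef]
    simp only [Finset.pair_comm a b]
  -- the four edges
  have E1 : (TSk (G2 k) k).Adj vP0 vQ0 := by
    refine TSk_adj_of vP0 vQ0 z3 z2
      (fun h => SS_ne z3 hz03.symm hz23.symm (Or.inr rfl) (show SS z0 z2 = SS z0 z3 from congrArg Subtype.val h))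
      ?_ ?_ (G2_adj_iff.2 ⟨hz23.symm, Or.inr (Or.inr (Or.inr ⟨rfl, rfl⟩))⟩)
    · exact pair_sdiff hz03.symm hz23.symm
    · exact pair_sdiff hz02.symm hz23
  have E2 : (TSk (G2 k) k).Adj vP0 vQ1 := by
    refine TSk_adj_of vP0 vQ1 z1 z0
      (fun h => SS_ne z1 hz01.symm hz12 (Or.inl rfl) (show SS z0 z2 = SS z1 z2 from congrArg Subtype.val h))
      ?_ ?_ (G2_adj_iff.2 ⟨hz01.symm, Or.inr (Or.inr (Or.inl ⟨rfl, rfl⟩))⟩)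
    · show (SS z0 z2 : Finset (Fin (k+2))) \ SS z1 z2 = {z1}
      rw [SS_comm z0 z2, SS_comm z1 z2]
      exact pair_sdiff hz12 hz01.symm
    · show (SS z1 z2 : Finset (Fin (k+2))) \ SS z0 z2 = {z0}
      rw [SS_comm z0 z2, SS_comm z1 z2]
      exact pair_sdiff hz02 hz01
  have E3 : (TSk (G2 k) k).Adj vP1 vQ0 := by
    refine TSk_adj_of vP1 vQ0 z0 z1
      (fun h => SS_ne z0 hz01 hz03 (Or.inl rfl) (show SS z1 z3 = SS z0 z3 from congrArg Subtype.val h))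
      ?_ ?_ (G2_adj_iff.2 ⟨hz01, Or.inl ⟨rfl, rfl⟩⟩)
    · show (SS z1 z3 : Finset (Fin (k+2))) \ SS z0 z3 = {z0}
      rw [SS_comm z1 z3, SS_comm z0 z3]
      exact pair_sdiff hz03 hz01
    · show (SS z0 z3 : Finset (Fin (k+2))) \ SS z1 z3 = {z1}
      rw [SS_comm z1 z3, SS_comm z0 z3]
      exact pair_sdiff hz13 hz01.symm
  have E4 : (TSk (G2 k) k).Adj vP1 vQ1 := by
    refine TSk_adj_of vP1 vQ1 z2 z3
      (fun h => SS_ne z2 hz12.symm hz23 (Or.inr rfl) (show SS z1 z3 = SS z1 z2 from congrArg Subtype.val h))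
      ?_ ?_ (G2_adj_iff.2 ⟨hz23, Or.inr (Or.inl ⟨rfl, rfl⟩)⟩)
    · exact pair_sdiff hz12.symm hz23
    · exact pair_sdiff hz13.symm hz23.symm
  -- the two non-edges
  have N1 : ¬ (TSk (G2 k) k).Adj vP0 vP1 :=
    not_TSk_adj_of_two (a := z1) (b := z3) (mem_SS.2 ⟨hz01.symm, hz12⟩)
      (fun h => (mem_SS.1 h).1 rfl) (mem_SS.2 ⟨hz03.symm, hz23.symm⟩)
      (fun h => (mem_SS.1 h).2 rfl) hz13
  have N2 : ¬ (TSk (G2 k) k).Adj vQ0 vQ1 :=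
    not_TSk_adj_of_two (a := z1) (b := z2) (mem_SS.2 ⟨hz01.symm, hz13⟩)
      (fun h => (mem_SS.1 h).1 rfl) (mem_SS.2 ⟨hz02.symm, hz23⟩)
      (fun h => (mem_SS.1 h).2 rfl) hz12
  let ψ : Fin 2 ⊕ Fin 2 → TSVert (G2 k) k := Sum.elim ![vP0, vP1] ![vQ0, vQ1]
  have hinj : Function.Injective ψ := by
    have d1 : vP0 ≠ vP1 :=
      fun h => SS_ne z1 hz01.symm hz12 (Or.inl rfl) (show SS z0 z2 = SS z1 z3 from congrArg Subtype.val h)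
    have d2 : vP0 ≠ vQ0 :=
      fun h => SS_ne z3 hz03.symm hz23.symm (Or.inr rfl) (show SS z0 z2 = SS z0 z3 from congrArg Subtype.val h)
    have d3 : vP0 ≠ vQ1 :=
      fun h => SS_ne z1 hz01.symm hz12 (Or.inl rfl) (show SS z0 z2 = SS z1 z2 from congrArg Subtype.val h)
    have d4 : vP1 ≠ vQ0 :=
      fun h => SS_ne z0 hz01 hz03 (Or.inl rfl) (show SS z1 z3 = SS z0 z3 from congrArg Subtype.val h)
    have d5 : vP1 ≠ vQ1 :=
      fun h => SS_ne z2 hz12.symm hz23 (Or.inr rfl) (show SS z1 z3 = SS z1 z2 from congrArg Subtype.val h)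
    have d6 : vQ0 ≠ vQ1 :=
      fun h => SS_ne z1 hz01.symm hz13 (Or.inl rfl) (show SS z0 z3 = SS z1 z2 from congrArg Subtype.val h)
    rintro (a | a) (b | b) h <;> fin_cases a <;> fin_cases b <;>
      simp only [ψ, Sum.elim_inl, Sum.elim_inr, Matrix.cons_val_zero, Matrix.cons_val_one,
        Matrix.head_cons] at h <;>
      first
        | rfl
        | exact absurd h d1 | exact absurd h d2 | exact absurd h d3
        | exact absurd h d4 | exact absurd h d5 | exact absurd h d6
        | exact absurd h.symm d1 | exact absurd h.symm d2 | exact absurd h.symm d3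
        | exact absurd h.symm d4 | exact absurd h.symm d5 | exact absurd h.symm d6
  have hsurj : Function.Surjective ψ := by
    intro S
    obtain ⟨a, b, ⟨haz, hbz⟩, hS⟩ := classify S
    rcases haz with rfl | rfl <;> rcases hbz with rfl | rfl
    · exact ⟨.inl 0, Subtype.ext (show (vP0 : Finset (Fin (k+2))) = _ from hS.symm)⟩
    · exact ⟨.inr 0, Subtype.ext (show (vQ0 : Finset (Fin (k+2))) = _ from hS.symm)⟩
    · exact ⟨.inr 1, Subtype.ext (show (vQ1 : Finset (Fin (k+2))) = _ from hS.symm)⟩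
    · exact ⟨.inl 1, Subtype.ext (show (vP1 : Finset (Fin (k+2))) = _ from hS.symm)⟩
  refine ⟨(SimpleGraph.Iso.symm ⟨Equiv.ofBijective ψ ⟨hinj, hsurj⟩, ?_⟩ :)⟩
  rintro (a | a) (b | b) <;> fin_cases a <;> fin_cases b <;>
    simp only [Equiv.ofBijective_apply, ψ, Sum.elim_inl, Sum.elim_inr, Matrix.cons_val_zero,
      Matrix.cons_val_one, Matrix.head_cons]
  · exact iff_of_false ((TSk (G2 k) k).loopless.irrefl _) (K_not_adj_ll _ _)
  · exact iff_of_false N1 (K_not_adj_ll _ _)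
  · exact iff_of_false (fun h => N1 h.symm) (K_not_adj_ll _ _)
  · exact iff_of_false ((TSk (G2 k) k).loopless.irrefl _) (K_not_adj_ll _ _)
  · exact iff_of_true E1 (K_adj_lr _ _)
  · exact iff_of_true E2 (K_adj_lr _ _)
  · exact iff_of_true E3 (K_adj_lr _ _)
  · exact iff_of_true E4 (K_adj_lr _ _)
  · exact iff_of_true E1.symm (K_adj_lr _ _).symm
  · exact iff_of_true E3.symm (K_adj_lr _ _).symm
  · exact iff_of_true E2.symm (K_adj_lr _ _).symm
  · exact iff_of_true E4.symm (K_adj_lr _ _).symm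
  · exact iff_of_false ((TSk (G2 k) k).loopless.irrefl _) (K_not_adj_rr _ _)
  · exact iff_of_false N2 (K_not_adj_rr _ _)
  · exact iff_of_false (fun h => N2 h.symm) (K_not_adj_rr _ _)
  · exact iff_of_false ((TSk (G2 k) k).loopless.irrefl _) (K_not_adj_rr _ _)
end C4Constr


/-- For `n ≥ m ≥ 1` and `k ≥ 2`, the complete bipartite graph `K_{m,n}` is a
`TS_k`-reconfiguration graph iff (`m = 1` and `n ≤ k`) or `m = n = 2`. -/
theorem stmt8 (m n k : ℕ) (hm : 1 ≤ m) (hmn : m ≤ n) (hk : 2 ≤ k) :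
    (∃ (W : Type) (_ : Fintype W) (dW : DecidableEq W) (G : SimpleGraph W),
      Nonempty ((@TSk W dW G k) ≃g completeBipartiteGraph (Fin m) (Fin n))) ↔
    ((m = 1 ∧ n ≤ k) ∨ (m = 2 ∧ n = 2)) := by
  constructor
  · rintro ⟨W, instW, dW, G, ⟨e⟩⟩
    haveI := dW
    by_contra hcon
    push_neg at hcon
    obtain ⟨h1, h2⟩ := hcon
    rcases eq_or_lt_of_le hm with hm1 | hm2
    · subst hm1
      exact @starCase W dW G k n hk (h1 rfl) e
    · rcases Nat.lt_or_ge n 3 with hn | hn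
      · exact h2 (by omega) (by omega)
      · exact @bigCase W dW G k m n hk (by omega) hn e
  · rintro (⟨hm1, hnk⟩ | ⟨hm2, hn2⟩)
    · subst hm1
      exact ⟨Fin k ⊕ Fin n, inferInstance, inferInstance, G1 k n, starConstr hk hmn hnk⟩
    · subst hm2
      subst hn2
      exact ⟨Fin (k+2), inferInstance, inferInstance, G2 k, c4Constr k hk⟩
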